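/- Let M be a structure in a finite relational language and let A be an infinite k-clique in M. Then the average type Av_A(x̄) is a well-defined complete quantifier-free k-type over M, and Av_A(x̄) ∈ Supp_k(M), i.e., it supports an infinite array. -/

import Mathlib

/- STATEMENT 12: Let `A` be an infinite `k`-clique in `M`.  Then the average type
`Av_A(x̄)` is a well-defined complete quantifier-free `k`-type over `M` and belongs to
`Supp_k(M)`, i.e. it supports an infinite array. -/

open FirstOrder Language Set

universe u v w

namespace Stmt12

variable (L : FirstOrder.Language.{v, w})

/-- Equality of quantifier-free types of two tuples over a parameter set. -/
def QFTypeEqOn {M : Type u} [L.Structure M] {α : Type} (c c' : α → M) (A : Set M) : Prop :=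
  ∀ (n : ℕ) (φ : L.Formula (α ⊕ Fin n)), BoundedFormula.IsQF φ →
    ∀ e : Fin n → M, (∀ i, e i ∈ A) →
      (φ.Realize (Sum.elim c e) ↔ φ.Realize (Sum.elim c' e))

/-- Two `k`-tuples are exchangeable. -/
def Exchangeable {M : Type u} [L.Structure M] {k : ℕ} (a b : Fin k → M) : Prop :=
  Disjoint (Set.range a) (Set.range b) ∧
    QFTypeEqOn L (Sum.elim a b) (Sum.elim b a) ((Set.range a ∪ Set.range b)ᶜ)

/-- A `k`-clique. -/
def IsKClique {M : Type u} [L.Structure M] (k : ℕ) (C : Set (Fin k → M)) : Prop :=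
  C.Nonempty ∧ (∀ a ∈ C, Function.Injective a) ∧
    ∀ a ∈ C, ∀ b ∈ C, a ≠ b → Exchangeable L a b

/-- An elementary extension of `M`. -/
structure EExt (M : Type u) [L.Structure M] where
  carrier : Type u
  [str : L.Structure carrier]
  emb : M ↪ₑ[L] carrier

attribute [instance] EExt.str

/-- The quantifier-free type of the `k`-tuple `c` over (the image of) `M`. -/
def qfTypeOf {M : Type u} (k : ℕ) {N : Type u} [L.Structure N] (g : M → N)
    (c : Fin k → N) : Set (L.Formula (Fin k ⊕ M)) :=
  {φ | BoundedFormula.IsQF φ ∧ φ.Realize (Sum.elim c g)}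

/-- `p` is a (complete) quantifier-free `k`-type over `M`. -/
def IsQFType (M : Type u) [L.Structure M] (k : ℕ) (p : Set (L.Formula (Fin k ⊕ M))) : Prop :=
  ∃ (E : EExt L M) (c : Fin k → E.carrier), p = qfTypeOf L k (⇑E.emb) c

/-- `p` supports an infinite array. -/
def SupportsInfiniteArray (M : Type u) [L.Structure M] (k : ℕ)
    (p : Set (L.Formula (Fin k ⊕ M))) : Prop :=
  ∃ (E : EExt L M) (c : ℕ → Fin k → E.carrier),
    (∀ i j, i ≠ j → Disjoint (Set.range (c i)) (Set.range (c j))) ∧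
    ∀ (i : ℕ), ∀ φ ∈ p, Formula.Realize φ (Sum.elim (c i) ⇑E.emb)

/-- The average type of a set `A` of `k`-tuples: the quantifier-free formulas `ψ(x̄, ē)`
with parameters `ē` from `M` holding of some tuple of `A` disjoint from `ē`. -/
def AvgType {M : Type u} [L.Structure M] (k : ℕ) (A : Set (Fin k → M)) :
    Set (L.Formula (Fin k ⊕ M)) :=
  {φ | ∃ (n : ℕ) (ψ : L.Formula (Fin k ⊕ Fin n)) (e : Fin n → M),
    BoundedFormula.IsQF ψ ∧ φ = ψ.relabel (Sum.map id e) ∧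
    ∃ a ∈ A, Disjoint (Set.range a) (Set.range e) ∧ ψ.Realize (Sum.elim a e)}


section Aux

open Filter

variable {L : FirstOrder.Language.{v, w}} {M : Type u} [L.Structure M]

lemma relabelAux_comp_apply {α β γ : Type*} (f : α → β) (g : β → γ) (x : α ⊕ Fin 0) :
    BoundedFormula.relabelAux ((Sum.inl ∘ g : β → γ ⊕ Fin 0)) 0
      (BoundedFormula.relabelAux ((Sum.inl ∘ f : α → β ⊕ Fin 0)) 0 x)
      = BoundedFormula.relabelAux ((Sum.inl ∘ (g ∘ f) : α → γ ⊕ Fin 0)) 0 x := by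
  rcases x with a | i
  · simp [BoundedFormula.relabelAux]
  · exact (Nat.not_lt_zero _ i.2).elim

lemma frelabel_equal {α β : Type*} (g : α → β) (t₁ t₂ : L.Term (α ⊕ Fin 0)) :
    Formula.relabel g (BoundedFormula.equal t₁ t₂)
      = BoundedFormula.equal (t₁.relabel (BoundedFormula.relabelAux (Sum.inl ∘ g) 0))
          (t₂.relabel (BoundedFormula.relabelAux (Sum.inl ∘ g) 0)) := rfl

lemma frelabel_rel {α β : Type*} (g : α → β) {l : ℕ} (R : L.Relations l)
    (ts : Fin l → L.Term (α ⊕ Fin 0)) :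
    Formula.relabel g (BoundedFormula.rel R ts)
      = BoundedFormula.rel R
          (fun i => (ts i).relabel (BoundedFormula.relabelAux (Sum.inl ∘ g) 0)) := rfl

lemma frelabel_imp {α β : Type*} (g : α → β) (φ ψ : L.Formula α) :
    Formula.relabel g (φ.imp ψ)
      = (Formula.relabel g φ).imp (Formula.relabel g ψ) :=
  BoundedFormula.relabel_imp _ _ _

lemma isQF_relabel_relabel {α β γ : Type*} (f : α → β) (g : β → γ)
    {φ : L.Formula α} (h : φ.IsQF) :
    (φ.relabel f).relabel g = φ.relabel (g ∘ f) := by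
  induction h with
  | falsum => rfl
  | of_isAtomic h =>
    cases h with
    | equal t₁ t₂ =>
      show (Formula.relabel g (Formula.relabel f (BoundedFormula.equal t₁ t₂)))
        = Formula.relabel (g ∘ f) (BoundedFormula.equal t₁ t₂)
      rw [frelabel_equal, frelabel_equal, frelabel_equal, Term.relabel_relabel,
        Term.relabel_relabel]
      congr 1 <;> · congr 1; funext x; exact relabelAux_comp_apply f g x
    | rel R ts =>
      show (Formula.relabel g (Formula.relabel f (BoundedFormula.rel R ts)))
        = Formula.relabel (g ∘ f) (BoundedFormula.rel R ts)
      rw [frelabel_rel, frelabel_rel, frelabel_rel]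
      congr 1
      funext i
      rw [Term.relabel_relabel]
      congr 1; funext x; exact relabelAux_comp_apply f g x
  | imp h₁ h₂ ih₁ ih₂ =>
    rw [frelabel_imp, frelabel_imp, frelabel_imp, ih₁, ih₂]


lemma term_eq_var [L.IsRelational] {γ : Type*} (t : L.Term γ) : ∃ v, t = Term.var v := by
  cases t with
  | var v => exact ⟨v, rfl⟩
  | func f ts => exact isEmptyElim f

/-- Replace an `M`-variable by a new parameter variable in slot `i`. -/
def slot (k : ℕ) (M : Type u) (n : ℕ) (i : Fin n) (v : (Fin k ⊕ M) ⊕ Fin 0) :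
    (Fin k ⊕ Fin n) ⊕ Fin 0 :=
  match v with
  | .inl (.inl j) => .inl (.inl j)
  | .inl (.inr _) => .inl (.inr i)
  | .inr x => .inr x

/-- The `M`-value of a variable, if any. -/
noncomputable def pval (k : ℕ) (M : Type u) [Nonempty M] (v : (Fin k ⊕ M) ⊕ Fin 0) : M :=
  match v with
  | .inl (.inr m) => m
  | _ => Classical.arbitrary M

lemma slot_spec {k n : ℕ} [Nonempty M] (e : Fin n → M) (i : Fin n)
    (v : (Fin k ⊕ M) ⊕ Fin 0) (he : e i = pval k M v) :
    BoundedFormula.relabelAux ((Sum.inl ∘ Sum.map id e :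
        Fin k ⊕ Fin n → (Fin k ⊕ M) ⊕ Fin 0)) 0 (slot k M n i v) = v := by
  rcases v with (j | m) | x
  · simp [slot, BoundedFormula.relabelAux]
  · simp [slot, BoundedFormula.relabelAux, pval] at he ⊢
    exact he
  · exact (Nat.not_lt_zero _ x.2).elim

lemma exists_support [L.IsRelational] [Nonempty M] {k : ℕ}
    {φ : L.Formula (Fin k ⊕ M)} (h : φ.IsQF) :
    ∃ (n : ℕ) (ψ : L.Formula (Fin k ⊕ Fin n)) (e : Fin n → M),
      ψ.IsQF ∧ φ = ψ.relabel (Sum.map id e) := by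
  induction h with
  | falsum =>
    exact ⟨0, BoundedFormula.falsum, fun i => (Nat.not_lt_zero _ i.2).elim,
      BoundedFormula.isQF_bot, rfl⟩
  | of_isAtomic h =>
    cases h with
    | equal t₁ t₂ =>
      obtain ⟨v₁, rfl⟩ := term_eq_var t₁
      obtain ⟨v₂, rfl⟩ := term_eq_var t₂
      refine ⟨2, BoundedFormula.equal (Term.var (slot k M 2 0 v₁)) (Term.var (slot k M 2 1 v₂)),
        ![pval k M v₁, pval k M v₂], (BoundedFormula.IsAtomic.equal _ _).isQF, ?_⟩
      rw [frelabel_equal]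
      show BoundedFormula.equal (Term.var v₁) (Term.var v₂) = _
      rw [show Term.relabel (BoundedFormula.relabelAux
            (Sum.inl ∘ Sum.map id ![pval k M v₁, pval k M v₂]) 0) (Term.var (slot k M 2 0 v₁))
          = Term.var (BoundedFormula.relabelAux
            (Sum.inl ∘ Sum.map id ![pval k M v₁, pval k M v₂]) 0 (slot k M 2 0 v₁)) from rfl,
        show Term.relabel (BoundedFormula.relabelAux
            (Sum.inl ∘ Sum.map id ![pval k M v₁, pval k M v₂]) 0) (Term.var (slot k M 2 1 v₂))
          = Term.var (BoundedFormula.relabelAux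
            (Sum.inl ∘ Sum.map id ![pval k M v₁, pval k M v₂]) 0 (slot k M 2 1 v₂)) from rfl,
        slot_spec _ _ _ rfl, slot_spec _ _ _ rfl]
    | rel R ts =>
      choose v hv using fun i => term_eq_var (ts i)
      refine ⟨_, BoundedFormula.rel R (fun i => Term.var (slot k M _ i (v i))),
        fun i => pval k M (v i), (BoundedFormula.IsAtomic.rel _ _).isQF, ?_⟩
      rw [frelabel_rel]
      show BoundedFormula.rel R ts = _
      congr 1
      funext i
      rw [hv i]
      exact (congrArg Term.var (slot_spec (fun j => pval k M (v j)) i (v i) rfl)).symm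
  | imp h₁ h₂ ih₁ ih₂ =>
    obtain ⟨n₁, ψ₁, e₁, hq₁, rfl⟩ := ih₁
    obtain ⟨n₂, ψ₂, e₂, hq₂, rfl⟩ := ih₂
    refine ⟨n₁ + n₂, (ψ₁.relabel (Sum.map id (Fin.castAdd n₂))).imp
        (ψ₂.relabel (Sum.map id (Fin.natAdd n₁))), Fin.append e₁ e₂,
      BoundedFormula.IsQF.imp (hq₁.relabel _) (hq₂.relabel _), ?_⟩
    rw [frelabel_imp, isQF_relabel_relabel _ _ hq₁, isQF_relabel_relabel _ _ hq₂]
    have c₁ : (Sum.map id (Fin.append e₁ e₂) ∘ Sum.map id (Fin.castAdd n₂) :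
        Fin k ⊕ Fin n₁ → Fin k ⊕ M) = Sum.map id e₁ := by
      funext x; rcases x with x | x
      · rfl
      · simp [Fin.append_left]
    have c₂ : (Sum.map id (Fin.append e₁ e₂) ∘ Sum.map id (Fin.natAdd n₁) :
        Fin k ⊕ Fin n₂ → Fin k ⊕ M) = Sum.map id e₂ := by
      funext x; rcases x with x | x
      · rfl
      · simp [Fin.append_right]
    rw [c₁, c₂]


lemma welldef {k : ℕ} {A : Set (Fin k → M)} (hA : IsKClique L k A) :
    ∀ (n : ℕ) (ψ : L.Formula (Fin k ⊕ Fin n)) (e : Fin n → M), ψ.IsQF →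
      ∀ a ∈ A, ∀ b ∈ A, Disjoint (Set.range a) (Set.range e) →
        Disjoint (Set.range b) (Set.range e) →
        (ψ.Realize (Sum.elim a e) ↔ ψ.Realize (Sum.elim b e)) := by
  intro n ψ e hq a ha b hb hae hbe
  rcases eq_or_ne a b with rfl | hab
  · exact Iff.rfl
  obtain ⟨hdisj, heq⟩ := hA.2.2 a ha b hb hab
  have hmem : ∀ i, e i ∈ (Set.range a ∪ Set.range b)ᶜ := by
    intro i
    simp only [Set.mem_compl_iff, Set.mem_union, not_or]
    exact ⟨Set.disjoint_right.mp hae (Set.mem_range_self i),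
      Set.disjoint_right.mp hbe (Set.mem_range_self i)⟩
  have h1 := heq n (ψ.relabel (Sum.map Sum.inl id))
    (BoundedFormula.IsQF.relabel hq _) e hmem
  have comp : ∀ (x y : Fin k → M),
      (Sum.elim (Sum.elim x y) e ∘ Sum.map Sum.inl id : Fin k ⊕ Fin n → M)
        = Sum.elim x e := by
    intro x y; funext z; rcases z with z | z <;> rfl
  rw [Formula.realize_relabel, Formula.realize_relabel, comp a b, comp b a] at h1
  exact h1

/-- The ultrapower of `M` along the hyperfilter on `ℕ`. -/
abbrev UProd (M : Type u) : Type u :=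
  Filter.Product (↑(Filter.hyperfilter ℕ) : Filter ℕ) (fun _ : ℕ => M)

/-- The class of a sequence in the ultrapower. -/
noncomputable def uMk {M : Type u} (f : ℕ → M) : UProd M := (↑f : UProd M)

lemma uMk_eq_uMk {M : Type u} {f g : ℕ → M} :
    uMk f = uMk g ↔ ∀ᶠ n in (↑(Filter.hyperfilter ℕ) : Filter ℕ), f n = g n :=
  ⟨fun h => Quotient.exact' h, fun h => Quotient.sound' h⟩

lemma realize_uMk [Nonempty M] {β : Type*} (φ : L.Formula β) (x : β → ℕ → M) :
    (φ.Realize (fun v => uMk (x v)) ↔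
      ∀ᶠ n in (↑(Filter.hyperfilter ℕ) : Filter ℕ), φ.Realize (fun v => x v n)) :=
  Ultraproduct.realize_formula_cast φ x

/-- The diagonal elementary embedding into the ultrapower. -/
noncomputable def diagEmb (M : Type u) [L.Structure M] [Nonempty M] :
    M ↪ₑ[L] UProd M where
  toFun m := uMk (fun _ => m)
  map_formula' n φ x := by
    have h := realize_uMk (L := L) (M := M) φ (fun i _ => x i)
    rw [Filter.eventually_const] at h
    exact h

end Aux

/-- The average type of an infinite `k`-clique is well defined (a quantifier-free formula
with parameters disjoint from some member of the clique holds of one member disjoint from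
the parameters iff it holds of all of them), it is a complete quantifier-free `k`-type over
`M`, and it supports an infinite array. -/
theorem avgType_wellDefined_and_supports
    [L.IsRelational] [Finite (Σ n, L.Relations n)]
    (M : Type u) [L.Structure M] (k : ℕ) (A : Set (Fin k → M))
    (hA : IsKClique L k A) (hInf : A.Infinite) :
    (∀ (n : ℕ) (ψ : L.Formula (Fin k ⊕ Fin n)) (e : Fin n → M), BoundedFormula.IsQF ψ →
      ∀ a ∈ A, ∀ b ∈ A, Disjoint (Set.range a) (Set.range e) →
        Disjoint (Set.range b) (Set.range e) →
        (ψ.Realize (Sum.elim a e) ↔ ψ.Realize (Sum.elim b e))) ∧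
    IsQFType L M k (AvgType L k A) ∧
    SupportsInfiniteArray L M k (AvgType L k A) := by
  classical
  have hwd := welldef hA
  refine ⟨hwd, ?_⟩
  -- basic consequences of being an infinite clique
  obtain ⟨x, hx, y, hy, hxy⟩ := hInf.nontrivial
  have hk : 0 < k := by
    rcases Nat.eq_zero_or_pos k with rfl | h
    · exact absurd (funext fun i => (Nat.not_lt_zero _ i.2).elim) hxy
    · exact h
  haveI : Nonempty M := ⟨x ⟨0, hk⟩⟩
  have hdisj : ∀ a ∈ A, ∀ b ∈ A, a ≠ b → Disjoint (Set.range a) (Set.range b) :=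
    fun a ha b hb hne => (hA.2.2 a ha b hb hne).1
  -- an injective enumeration of clique members
  set f : ℕ → Fin k → M := fun n => ((Set.Infinite.natEmbedding A hInf) n : Fin k → M) with hf_def
  have hfA : ∀ n, f n ∈ A := fun n => ((Set.Infinite.natEmbedding A hInf) n).2
  have hfinj : Function.Injective f := fun m n h =>
    (Set.Infinite.natEmbedding A hInf).injective (Subtype.ext h)
  -- the elementary extension and the array
  let E : EExt L M := { carrier := UProd M, emb := diagEmb M }
  let c : ℕ → Fin k → UProd M := fun i p => uMk (fun n => f (Nat.pair i n) p)
  have hcdisj : ∀ i j, i ≠ j → Disjoint (Set.range (c i)) (Set.range (c j)) := by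
    intro i j hij
    rw [Set.disjoint_left]
    rintro _ ⟨p, rfl⟩ ⟨q, hq⟩
    obtain ⟨n, hn⟩ := (uMk_eq_uMk.mp hq).exists
    have hne : f (Nat.pair j n) ≠ f (Nat.pair i n) := by
      intro hcon
      exact hij ((Nat.pair_eq_pair.mp (hfinj hcon)).1.symm)
    exact Set.disjoint_left.mp (hdisj _ (hfA _) _ (hfA _) hne)
      (Set.mem_range_self q) (hn ▸ Set.mem_range_self p)
  have hcof : ∀ (i : ℕ) (n : ℕ) (e : Fin n → M),
      ∀ᶠ m in (↑(Filter.hyperfilter ℕ) : Filter ℕ),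
        Disjoint (Set.range (f (Nat.pair i m))) (Set.range e) := by
    intro i n e
    apply Filter.mem_hyperfilter_of_finite_compl
    have hsub : {m : ℕ | Disjoint (Set.range (f (Nat.pair i m))) (Set.range e)}ᶜ ⊆
        ⋃ q : Fin n, {m : ℕ | e q ∈ Set.range (f (Nat.pair i m))} := by
      intro m hm
      rw [Set.mem_compl_iff, Set.mem_setOf_eq, Set.not_disjoint_iff] at hm
      obtain ⟨z, hz1, hz2⟩ := hm
      obtain ⟨q, rfl⟩ := hz2
      exact Set.mem_iUnion.2 ⟨q, hz1⟩
    refine Set.Finite.subset (Set.finite_iUnion fun q => ?_) hsub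
    apply Set.Subsingleton.finite
    intro m₁ h₁ m₂ h₂
    by_contra hne
    have hne' : f (Nat.pair i m₁) ≠ f (Nat.pair i m₂) := by
      intro hcon
      exact hne (Nat.pair_eq_pair.mp (hfinj hcon)).2
    exact absurd h₂ (Set.disjoint_left.mp (hdisj _ (hfA _) _ (hfA _) hne') h₁)
  -- the members of the array realize the average type
  have hcomp : ∀ (i : ℕ) (n : ℕ) (e : Fin n → M),
      ((Sum.elim (c i) (⇑E.emb ∘ e) : Fin k ⊕ Fin n → UProd M))
        = fun v => uMk (fun m => Sum.elim (f (Nat.pair i m)) e v) := by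
    intro i n e
    funext z; rcases z with z | z <;> rfl
  have hreal : ∀ (i : ℕ), ∀ φ ∈ AvgType L k A,
      Formula.Realize φ (Sum.elim (c i) ⇑E.emb) := by
    intro i φ hφ
    obtain ⟨n, ψ, e, hqψ, rfl, a', ha', hdis', hre'⟩ := hφ
    rw [Formula.realize_relabel]
    have : (Sum.elim (c i) ⇑E.emb ∘ Sum.map id e : Fin k ⊕ Fin n → UProd M)
        = Sum.elim (c i) (⇑E.emb ∘ e) := by
      funext z; rcases z with z | z <;> rfl
    rw [this, hcomp i n e, realize_uMk]
    filter_upwards [hcof i n e] with m hm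
    exact (hwd n ψ e hqψ a' ha' (f (Nat.pair i m)) (hfA _) hdis' hm).mp hre'
  refine ⟨⟨E, c 0, ?_⟩, E, c, hcdisj, hreal⟩
  -- the average type is the quantifier-free type of `c 0`
  ext φ
  constructor
  · intro hφ
    obtain ⟨n, ψ, e, hqψ, hrel, -⟩ := id hφ
    exact ⟨hrel ▸ BoundedFormula.IsQF.relabel hqψ _, hreal 0 φ hφ⟩
  · rintro ⟨hqf, hrz⟩
    obtain ⟨n, ψ, e, hq, rfl⟩ := exists_support hqf
    rw [Formula.realize_relabel] at hrz
    have : (Sum.elim (c 0) ⇑E.emb ∘ Sum.map id e : Fin k ⊕ Fin n → UProd M)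
        = Sum.elim (c 0) (⇑E.emb ∘ e) := by
      funext z; rcases z with z | z <;> rfl
    rw [this, hcomp 0 n e, realize_uMk] at hrz
    obtain ⟨m, h1, h2⟩ := (hrz.and (hcof 0 n e)).exists
    exact ⟨n, ψ, e, hq, rfl, f (Nat.pair 0 m), hfA _, h2, h1⟩

end Stmt12
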